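/- Let Γ = (G,ℓ) be an extended tropical curve of genus g with n legs, with G stable. Then the set of isomorphism classes of extended spin tropical curves (Γ',P,s), with Γ' = (G,ℓ') having the same underlying graph G, such that the extended tropical curve (G, π^trop(ℓ')) is isomorphic to Γ — where π^trop(ℓ')(e) = 2ℓ'(e) for e ∈ E ∖ P and π^trop(ℓ')(e) = ℓ'(e) for e ∈ P — is in bijection with the quotient S^trop_Γ / Aut(Γ) of the set of spin structures on Γ by the action of the automorphism group of Γ. -/

import Mathlib

/-!
Common combinatorial preliminaries: weighted graphs with legs, contractions,
spin structures, following Caporaso–Melo–Pacini, "Tropicalizing the moduli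
space of spin curves".
-/

attribute [local instance] Classical.propDecidable

noncomputable section

/-- A weighted graph with legs.  Edges are recorded as elements of a finite
type `E` together with their (unordered) pair of endpoints `ends e : Sym2 V`
(a loop corresponds to a diagonal pair); legs are elements of a finite type
`Lg` with an endpoint map `legEnd`; `w` is the weight function. -/
structure LegGraph : Type 1 where
  V : Type
  E : Type
  Lg : Type
  fV : Fintype V
  fE : Fintype E
  fL : Fintype Lg
  dV : DecidableEq V
  dE : DecidableEq E
  dL : DecidableEq Lg
  neV : Nonempty V
  ends : E → Sym2 V
  legEnd : Lg → V
  w : V → ℕ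

attribute [instance] LegGraph.fV LegGraph.fE LegGraph.fL LegGraph.dV LegGraph.dE LegGraph.dL LegGraph.neV

namespace LegGraph

variable (G : LegGraph)

/-- The multiplicity of the vertex `v` in the edge `e` (`2` for a loop at `v`). -/
def degMul (v : G.V) (e : G.E) : ℕ :=
  Sym2.lift ⟨fun a b => (if a = v then 1 else 0) + (if b = v then 1 else 0),
    fun _ _ => add_comm _ _⟩ (G.ends e)

/-- The degree of a vertex: number of non-leg half-edges ending at it. -/
def deg (v : G.V) : ℕ := ∑ e, G.degMul v e

/-- The number of legs ending at a vertex. -/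
def legsAt (v : G.V) : ℕ := (Finset.univ.filter fun l => G.legEnd l = v).card

/-- The number of loops based at a vertex. -/
def loops (v : G.V) : ℕ := (Finset.univ.filter fun e => G.ends e = Sym2.diag v).card

/-- The boundary map `∂ : E_G → V_G` over `F₂`, sending an edge to the sum of
its two endpoints. -/
def boundary : (G.E → ZMod 2) →ₗ[ZMod 2] (G.V → ZMod 2) where
  toFun x := fun v => ∑ e, x e * (G.degMul v e : ZMod 2)
  map_add' x y := by
    funext v
    simp [add_mul, Finset.sum_add_distrib]
  map_smul' c x := by
    funext v
    simp [Finset.mul_sum, mul_assoc]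

/-- The `F₂`-indicator vector of a set of edges. -/
def indicator (P : Finset G.E) : G.E → ZMod 2 := fun e => if e ∈ P then 1 else 0

/-- A subset of edges is cyclic if it lies in the cycle space `C_G = ker ∂`,
i.e. its indicator vector is killed by the boundary map. -/
def IsCyclic (P : Finset G.E) : Prop := G.boundary (G.indicator P) = 0

/-- Adjacency through an edge belonging to `P`. -/
def PAdj (P : Finset G.E) (u v : G.V) : Prop :=
  ∃ e ∈ P, u ∈ G.ends e ∧ v ∈ G.ends e

/-- The vertex set of the contraction `G/P`: connected components of `(V, P)`. -/
def CompV (P : Finset G.E) : Type := Quot (G.PAdj P)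

instance (P : Finset G.E) : Finite (G.CompV P) := Quot.finite _
instance (P : Finset G.E) : Fintype (G.CompV P) := Fintype.ofFinite _
instance (P : Finset G.E) : Nonempty (G.CompV P) := G.neV.map (Quot.mk _)

/-- The set of vertices of `G` lying in a given component. -/
def fiberV (P : Finset G.E) (x : G.CompV P) : Finset G.V :=
  Finset.univ.filter fun v => Quot.mk (G.PAdj P) v = x

/-- The set of edges of `P` lying in a given component. -/
def fiberE (P : Finset G.E) (x : G.CompV P) : Finset G.E :=
  P.filter fun e => ∀ v ∈ G.ends e, Quot.mk (G.PAdj P) v = x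

/-- The weight of a vertex `x` of `G/P`: the genus of its preimage, i.e. the
sum of the weights of the vertices in the component plus its first Betti
number `#edges - #vertices + 1`. -/
def quotWeight (P : Finset G.E) (x : G.CompV P) : ℕ :=
  (∑ v ∈ G.fiberV P x, G.w v) + ((G.fiberE P x).card + 1 - (G.fiberV P x).card)

/-- Connectedness of the graph. -/
def Connected : Prop := ∀ u v : G.V, Relation.EqvGen (G.PAdj Finset.univ) u v

/-- The number of connected components `c(G)`. -/
def numComp : ℕ := Nat.card (G.CompV Finset.univ)

/-- The first Betti number `b₁(G) = |E| - |V| + c(G)`. -/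
def b1 : ℕ := Fintype.card G.E + G.numComp - Fintype.card G.V

/-- The genus `g(G) = Σ_v w(v) + b₁(G)`. -/
def genus : ℕ := (∑ v, G.w v) + G.b1

/-- The number of legs. -/
def numLegs : ℕ := Fintype.card G.Lg

/-- Stability: connected and `2w(v) - 2 + deg(v) + ℓ(v) > 0` at every vertex. -/
def Stable : Prop :=
  G.Connected ∧ ∀ v : G.V, 2 < 2 * G.w v + G.deg v + G.legsAt v

/-- `G` is Eulerian (cyclic) if every vertex has even degree, i.e. the set of
all edges lies in the cycle space. -/
def Eulerian : Prop := G.IsCyclic Finset.univ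

/-- A basic graph: a stable cyclic (Eulerian) graph of genus `≥ 2` with at
least one edge, all weights `≤ 1`, and `w(v) + deg(v) + ℓ(v) ≤ 4` at every
vertex with equality only if there is a loop at `v`. -/
def IsBasic : Prop :=
  G.Stable ∧ 2 ≤ G.genus ∧ Nonempty G.E ∧ G.Eulerian ∧
  (∀ v, G.w v ≤ 1) ∧
  (∀ v, G.w v + G.deg v + G.legsAt v ≤ 4) ∧
  (∀ v, G.w v + G.deg v + G.legsAt v = 4 → 1 ≤ G.loops v)

/-- `c⁺`: the number of vertices of `G/P` of positive weight, i.e. the number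
of connected components of `P̄` of positive genus. -/
def cPlus (P : Finset G.E) : ℕ :=
  (Finset.univ.filter fun x : G.CompV P => 0 < G.quotWeight P x).card

/-- The contracted graph `G/P`. -/
def contract (P : Finset G.E) : LegGraph where
  V := G.CompV P
  E := {e : G.E // e ∉ P}
  Lg := G.Lg
  fV := inferInstance
  fE := inferInstance
  fL := G.fL
  dV := Classical.decEq _
  dE := inferInstance
  dL := G.dL
  neV := inferInstance
  ends := fun e => (G.ends e.1).map (Quot.mk (G.PAdj P))
  legEnd := fun l => Quot.mk (G.PAdj P) (G.legEnd l)
  w := G.quotWeight P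

/-- An ordered pair of endpoints of an edge. -/
def endPair (e : G.E) : G.V × G.V := Classical.choose (Quot.exists_rep (G.ends e))

end LegGraph

/-- A spin structure on a graph `G`: a cyclic subset `P` of edges and a sign
function on the vertices of `G/P` vanishing at all vertices of weight `0`. -/
structure SpinStructure (G : LegGraph) where
  P : Finset G.E
  cyclic : G.IsCyclic P
  s : G.CompV P → ZMod 2
  vanish : ∀ x, G.quotWeight P x = 0 → s x = 0

/-- The parity of a spin structure: the parity of `Σ_{v ∈ V(G/P)} s(v)`. -/
def SpinStructure.parity {G : LegGraph} (σ : SpinStructure G) : ZMod 2 := ∑ x, σ.s x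

/-- A contraction of graphs `γ : G → G' = G/F`: the edges of `G'` are
identified with `E(G) ∖ F`, the legs of `G'` with those of `G`; the vertex
map is surjective, its fibers are exactly the connected components of
`(V(G), F)`, endpoints and legs are compatible, and the weight of a vertex of
`G'` is the genus of its preimage. -/
structure Contraction (G G' : LegGraph) where
  F : Finset G.E
  vMap : G.V → G'.V
  eEquiv : G'.E ≃ {e : G.E // e ∉ F}
  lEquiv : G'.Lg ≃ G.Lg
  vSurj : Function.Surjective vMap
  ends_compat : ∀ e' : G'.E, G'.ends e' = (G.ends (eEquiv e').1).map vMap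
  leg_compat : ∀ l' : G'.Lg, G'.legEnd l' = vMap (G.legEnd (lEquiv l'))
  collapse : ∀ e ∈ F, ∀ u ∈ G.ends e, ∀ v ∈ G.ends e, vMap u = vMap v
  fiber_conn : ∀ u v : G.V, vMap u = vMap v → Relation.EqvGen (G.PAdj F) u v
  w_compat : ∀ v' : G'.V,
    G'.w v' = (∑ v ∈ Finset.univ.filter (fun v => vMap v = v'), G.w v)
      + (((F.filter fun e => ∀ u ∈ G.ends e, vMap u = v').card + 1)
          - (Finset.univ.filter fun v => vMap v = v').card)

namespace Contraction

variable {G G' : LegGraph} (γ : Contraction G G')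

/-- The induced map `γ^E_* : E_G → E_{G'}` (γ^E_*(e) = e if e ∉ F, 0 else). -/
def eStar : (G.E → ZMod 2) →ₗ[ZMod 2] (G'.E → ZMod 2) where
  toFun x := fun e' => x (γ.eEquiv e').1
  map_add' _ _ := rfl
  map_smul' _ _ := rfl

/-- The induced map `γ^V_* : V_G → V_{G'}`. -/
def vStar : (G.V → ZMod 2) →ₗ[ZMod 2] (G'.V → ZMod 2) where
  toFun x := fun v' => ∑ v ∈ Finset.univ.filter (fun v => γ.vMap v = v'), x v
  map_add' x y := by
    funext v'
    simp [Finset.sum_add_distrib]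
  map_smul' c x := by
    funext v'
    simp [Finset.mul_sum]

/-- The pushforward `γ_* P = P ∖ F` of a set of edges, as a subset of `E(G')`. -/
def pushE (P : Finset G.E) : Finset G'.E :=
  Finset.univ.filter fun e' => (γ.eEquiv e' : {e : G.E // e ∉ γ.F}).1 ∈ P

/-- The graph of the induced map `γ̄ : V(G/P) → V(G'/P')` on components. -/
def compMapsTo (P : Finset G.E) (P' : Finset G'.E)
    (x : G.CompV P) (x' : G'.CompV P') : Prop :=
  ∃ v : G.V, Quot.mk (G.PAdj P) v = x ∧ Quot.mk (G'.PAdj P') (γ.vMap v) = x'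

/-- The pushforward sign function: `s'(v') = Σ_{v ∈ γ̄⁻¹(v')} s(v)`. -/
def pushS (P : Finset G.E) (s : G.CompV P → ZMod 2) :
    G'.CompV (γ.pushE P) → ZMod 2 :=
  fun x' => ∑ x ∈ Finset.univ.filter
    (fun x => γ.compMapsTo P (γ.pushE P) x x'), s x

/-- `γ_* σ = σ'` for spin structures. -/
def SpinMapsTo (σ : SpinStructure G) (σ' : SpinStructure G') : Prop :=
  σ'.P = γ.pushE σ.P ∧ HEq σ'.s (γ.pushS σ.P σ.s)

end Contraction

/-- An automorphism of a graph: weight-preserving bijection on vertices,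
bijection on edges compatible with endpoints, fixing every leg. -/
structure GraphAut (G : LegGraph) where
  vE : G.V ≃ G.V
  eE : G.E ≃ G.E
  ends_compat : ∀ e, G.ends (eE e) = (G.ends e).map vE
  w_compat : ∀ v, G.w (vE v) = G.w v
  leg_fix : ∀ l, G.legEnd l = vE (G.legEnd l)

namespace GraphAut

variable {G : LegGraph}

/-- Composition of automorphisms (`α.comp β` acts by `β` first, then `α`). -/
def comp (α β : GraphAut G) : GraphAut G where
  vE := β.vE.trans α.vE
  eE := β.eE.trans α.eE
  ends_compat e := by
    simp only [Equiv.trans_apply, Equiv.coe_trans]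
    rw [α.ends_compat, β.ends_compat, Sym2.map_map]
  w_compat v := by
    simp only [Equiv.trans_apply]
    rw [α.w_compat, β.w_compat]
  leg_fix l := by
    simp only [Equiv.trans_apply]
    rw [← β.leg_fix, ← α.leg_fix]

/-- `α_* σ = σ'` for an automorphism `α` and spin structures `σ, σ'`. -/
def SpinMapsTo (α : GraphAut G) (σ σ' : SpinStructure G) : Prop :=
  σ'.P = σ.P.image α.eE ∧
  ∀ v : G.V, σ'.s (Quot.mk (G.PAdj σ'.P) (α.vE v)) = σ.s (Quot.mk (G.PAdj σ.P) v)

/-- `α` preserves the spin structure `σ`, i.e. `α_*(P,s) = (P,s)`. -/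
def PreservesSpin (α : GraphAut G) (σ : SpinStructure G) : Prop :=
  α.SpinMapsTo σ σ

end GraphAut

/-- The graph `P̄ = G - R°` where `R = E ∖ P`: same vertices, edges `P`, and
the legs of `G` together with a pair of new legs for each edge of `R`, placed
at its two endpoints. -/
def LegGraph.legify (G : LegGraph) (P : Finset G.E) : LegGraph where
  V := G.V
  E := {e : G.E // e ∈ P}
  Lg := G.Lg ⊕ ({e : G.E // e ∉ P} × Bool)
  fV := G.fV
  fE := inferInstance
  fL := inferInstance
  dV := G.dV
  dE := inferInstance
  dL := inferInstance
  neV := G.neV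
  ends := fun e => G.ends e.1
  legEnd := fun l =>
    match l with
    | Sum.inl l => G.legEnd l
    | Sum.inr (e, b) => if b then (G.endPair e.1).1 else (G.endPair e.1).2
  w := G.w

/-- `G` is a stable graph of genus `g` with `n` legs. -/
def StG (g n : ℕ) (G : LegGraph) : Prop := G.Stable ∧ G.genus = g ∧ G.numLegs = n

/-- Objects of the poset `C_{g,n}` before taking isomorphism classes. -/
def CycObj : Type 1 := Σ G : LegGraph, Finset G.E

/-- Objects of the poset `SP_{g,n}` before taking isomorphism classes. -/
def SpinObj : Type 1 := Σ G : LegGraph, SpinStructure G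

/-- Order on graphs: `G ≥ G'` iff there is a contraction `G → G'`. -/
def GraphGe (G G' : LegGraph) : Prop := Nonempty (Contraction G G')

/-- Order on `C_{g,n}`: `(G,P) ≥ (G',P')` iff some contraction pushes `P` to `P'`. -/
def CycGe (a b : CycObj) : Prop := ∃ γ : Contraction a.1 b.1, γ.pushE a.2 = b.2

/-- Order on `SP_{g,n}`: `(G,P,s) ≥ (G',P',s')` iff some contraction pushes
`(P,s)` to `(P',s')`. -/
def SpinGe (a b : SpinObj) : Prop := ∃ γ : Contraction a.1 b.1, γ.SpinMapsTo a.2 b.2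

/-- `q : X → Y` is a quotient of posets (for the `≥`-relations `geA`, `geB`):
it is surjective, order-preserving, and any relation downstairs lifts. -/
def IsPosetQuotient {α : Sort*} {β : Sort*}
    (geA : α → α → Prop) (geB : β → β → Prop) (q : α → β) : Prop :=
  Function.Surjective q ∧
  (∀ a a', geA a a' → geB (q a) (q a')) ∧
  (∀ b b', geB b b' → ∃ a a', q a = b ∧ q a' = b' ∧ geA a a')

/-- Strict order `x > y` associated to a `≥`-relation. -/
def StrictGt {α : Sort*} (ge : α → α → Prop) (x y : α) : Prop := ge x y ∧ ¬ ge y x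

/-- `x` covers `y`. -/
def Covers {α : Sort*} (ge : α → α → Prop) (x y : α) : Prop :=
  StrictGt ge x y ∧ ¬ ∃ z, StrictGt ge x z ∧ StrictGt ge z y

/-- `ρ` is a rank function for the `≥`-relation `ge`. -/
def IsRankFn {α : Sort*} (ge : α → α → Prop) (ρ : α → ℕ) : Prop :=
  (∀ x y, StrictGt ge x y → ρ y < ρ x) ∧
  (∀ x y, Covers ge x y → ρ x = ρ y + 1)


/-- The length function of `π^trop` applied to a spin tropical curve with
spin cycle `P`: edges outside `P` have their length doubled. -/
def piTropLen (G : LegGraph) (P : Finset G.E) (ℓ : G.E → ENNReal) :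
    G.E → ENNReal :=
  fun e => if e ∈ P then ℓ e else 2 * ℓ e

/-! ### Auxiliary machinery for Statement 17 -/

namespace GraphAut

variable {G : LegGraph}

/-- The identity automorphism. -/
def one (G : LegGraph) : GraphAut G where
  vE := Equiv.refl _
  eE := Equiv.refl _
  ends_compat e := by simp [Sym2.map_id]
  w_compat _ := rfl
  leg_fix _ := rfl

/-- The inverse automorphism. -/
def inv (α : GraphAut G) : GraphAut G where
  vE := α.vE.symm
  eE := α.eE.symm
  ends_compat e := by
    have h := α.ends_compat (α.eE.symm e)
    rw [Equiv.apply_symm_apply] at h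
    rw [h, Sym2.map_map]
    have hid : (⇑α.vE.symm ∘ ⇑α.vE) = id := funext fun x => α.vE.symm_apply_apply x
    rw [hid, Sym2.map_id, id_eq]
  w_compat v := by
    have h := α.w_compat (α.vE.symm v)
    rw [Equiv.apply_symm_apply] at h
    exact h.symm
  leg_fix l := ((congrArg α.vE.symm (α.leg_fix l)).trans (α.vE.symm_apply_apply _)).symm

end GraphAut

section Push

variable {G : LegGraph} (α : GraphAut G)

lemma boundary_apply (G : LegGraph) (x : G.E → ZMod 2) (v : G.V) :
    G.boundary x v = ∑ e, x e * (G.degMul v e : ZMod 2) := rfl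

lemma degMul_push (v : G.V) (e : G.E) :
    G.degMul (α.vE v) (α.eE e) = G.degMul v e := by
  unfold LegGraph.degMul
  rw [α.ends_compat]
  induction G.ends e using Sym2.inductionOn with
  | hf a b => simp [Sym2.map_pair_eq, Sym2.lift_mk, α.vE.injective.eq_iff]

lemma isCyclic_push {P : Finset G.E} (h : G.IsCyclic P) :
    G.IsCyclic (P.image α.eE) := by
  unfold LegGraph.IsCyclic at h ⊢
  funext v
  obtain ⟨u, rfl⟩ := α.vE.surjective v
  have hu : (∑ e, G.indicator P e * (G.degMul u e : ZMod 2)) = 0 := by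
    have h' := congrFun h u
    rwa [boundary_apply] at h'
  rw [Pi.zero_apply, boundary_apply]
  calc ∑ e, G.indicator (P.image α.eE) e * (G.degMul (α.vE u) e : ZMod 2)
      = ∑ e, G.indicator (P.image α.eE) (α.eE e) * (G.degMul (α.vE u) (α.eE e) : ZMod 2) :=
        (Equiv.sum_comp α.eE _).symm
    _ = ∑ e, G.indicator P e * (G.degMul u e : ZMod 2) := by
        refine Finset.sum_congr rfl fun e _ => ?_
        rw [degMul_push]
        congr 1
        unfold LegGraph.indicator
        by_cases he : e ∈ P
        · rw [if_pos he, if_pos (Finset.mem_image_of_mem _ he)]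
        · rw [if_neg he, if_neg (fun hc => he (α.eE.injective.mem_finset_image.1 hc))]
    _ = 0 := hu

lemma pAdj_push (P : Finset G.E) {u v : G.V} (h : G.PAdj P u v) :
    G.PAdj (P.image α.eE) (α.vE u) (α.vE v) := by
  obtain ⟨e, he, hu, hv⟩ := h
  exact ⟨α.eE e, Finset.mem_image_of_mem _ he,
    by rw [α.ends_compat]; exact Sym2.mem_map.2 ⟨u, hu, rfl⟩,
    by rw [α.ends_compat]; exact Sym2.mem_map.2 ⟨v, hv, rfl⟩⟩

lemma pAdj_push_inv (P : Finset G.E) {u v : G.V}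
    (h : G.PAdj (P.image α.eE) u v) : G.PAdj P (α.vE.symm u) (α.vE.symm v) := by
  obtain ⟨e', he', hu, hv⟩ := h
  obtain ⟨e, heP, rfl⟩ := Finset.mem_image.1 he'
  rw [α.ends_compat] at hu hv
  obtain ⟨a, ha, rfl⟩ := Sym2.mem_map.1 hu
  obtain ⟨b, hb, rfl⟩ := Sym2.mem_map.1 hv
  rw [Equiv.symm_apply_apply, Equiv.symm_apply_apply]
  exact ⟨e, heP, ha, hb⟩

lemma eqvGen_map {A B : Type} (f : A → B) {r : A → A → Prop} {r' : B → B → Prop}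
    (h : ∀ u v, r u v → r' (f u) (f v)) {a b : A} (hab : Relation.EqvGen r a b) :
    Relation.EqvGen r' (f a) (f b) := by
  induction hab with
  | rel u v h' => exact .rel _ _ (h u v h')
  | refl u => exact .refl _
  | symm u v _ ih => exact .symm _ _ ih
  | trans u v w _ _ ih1 ih2 => exact .trans _ _ _ ih1 ih2

lemma quotmk_push_iff (P : Finset G.E) (a b : G.V) :
    Quot.mk (G.PAdj (P.image α.eE)) (α.vE a) = Quot.mk (G.PAdj (P.image α.eE)) (α.vE b)
    ↔ Quot.mk (G.PAdj P) a = Quot.mk (G.PAdj P) b := by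
  rw [Quot.eq, Quot.eq]
  constructor
  · intro h
    have h' := eqvGen_map α.vE.symm (fun u v hu => pAdj_push_inv α P hu) h
    simpa using h'
  · exact eqvGen_map α.vE (fun u v hu => pAdj_push α P hu)

lemma fiberV_push (P : Finset G.E) (u : G.V) :
    G.fiberV (P.image α.eE) (Quot.mk _ (α.vE u))
      = (G.fiberV P (Quot.mk _ u)).image α.vE := by
  ext v
  simp only [LegGraph.fiberV, Finset.mem_filter, Finset.mem_univ, true_and, Finset.mem_image]
  constructor
  · intro hv
    refine ⟨α.vE.symm v, ?_, Equiv.apply_symm_apply _ _⟩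
    rw [← quotmk_push_iff α P, Equiv.apply_symm_apply]
    exact hv
  · rintro ⟨a, ha, rfl⟩
    exact (quotmk_push_iff α P a u).2 ha

lemma fiberE_push (P : Finset G.E) (u : G.V) :
    G.fiberE (P.image α.eE) (Quot.mk _ (α.vE u))
      = (G.fiberE P (Quot.mk _ u)).image α.eE := by
  ext e'
  simp only [LegGraph.fiberE, Finset.mem_filter, Finset.mem_image]
  constructor
  · rintro ⟨⟨e, heP, rfl⟩, hall⟩
    refine ⟨e, ⟨heP, fun v hv => ?_⟩, rfl⟩
    have hmem : α.vE v ∈ G.ends (α.eE e) := by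
      rw [α.ends_compat]; exact Sym2.mem_map.2 ⟨v, hv, rfl⟩
    exact (quotmk_push_iff α P v u).1 (hall _ hmem)
  · rintro ⟨e, ⟨heP, hall⟩, rfl⟩
    refine ⟨⟨e, heP, rfl⟩, fun v hv => ?_⟩
    rw [α.ends_compat] at hv
    obtain ⟨a, ha, rfl⟩ := Sym2.mem_map.1 hv
    exact (quotmk_push_iff α P a u).2 (hall a ha)

lemma quotWeight_push (P : Finset G.E) (u : G.V) :
    G.quotWeight (P.image α.eE) (Quot.mk _ (α.vE u)) = G.quotWeight P (Quot.mk _ u) := by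
  unfold LegGraph.quotWeight
  rw [fiberV_push, fiberE_push,
    Finset.card_image_of_injective _ α.eE.injective,
    Finset.card_image_of_injective _ α.vE.injective,
    Finset.sum_image (fun a _ b _ hab => α.vE.injective hab)]
  simp only [α.w_compat]

/-- Pushforward of a spin structure along an automorphism. -/
def pushSpin (σ : SpinStructure G) : SpinStructure G where
  P := σ.P.image α.eE
  cyclic := isCyclic_push α σ.cyclic
  s := fun x => σ.s (Quot.map α.vE.symm (fun _ _ h => pAdj_push_inv α σ.P h) x)
  vanish := by
    intro x hx
    induction x using Quot.ind with
    | mk v =>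
      obtain ⟨u, rfl⟩ := α.vE.surjective v
      rw [quotWeight_push] at hx
      show σ.s (Quot.mk (G.PAdj σ.P) (α.vE.symm (α.vE u))) = 0
      rw [Equiv.symm_apply_apply]
      exact σ.vanish _ hx

lemma pushSpin_mapsTo (σ : SpinStructure G) :
    α.SpinMapsTo σ (pushSpin α σ) := by
  refine ⟨rfl, fun v => ?_⟩
  show σ.s (Quot.mk (G.PAdj σ.P) (α.vE.symm (α.vE v))) = σ.s (Quot.mk (G.PAdj σ.P) v)
  rw [Equiv.symm_apply_apply]

lemma spinMapsTo_comp {α β : GraphAut G} {σ σ' σ'' : SpinStructure G}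
    (h1 : α.SpinMapsTo σ σ') (h2 : β.SpinMapsTo σ' σ'') :
    (β.comp α).SpinMapsTo σ σ'' := by
  constructor
  · rw [h2.1, h1.1, Finset.image_image]
    rfl
  · intro v
    have h := h2.2 (α.vE v)
    rw [h1.2 v] at h
    exact h

lemma spinMapsTo_inv {α : GraphAut G} {σ σ' : SpinStructure G}
    (h : α.SpinMapsTo σ σ') : α.inv.SpinMapsTo σ' σ := by
  constructor
  · have hid : (⇑α.inv.eE ∘ ⇑α.eE) = id := funext fun x => α.eE.symm_apply_apply x
    rw [h.1, Finset.image_image, hid, Finset.image_id]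
  · intro v
    obtain ⟨u, rfl⟩ := α.vE.surjective v
    have hu := h.2 u
    show σ.s (Quot.mk (G.PAdj σ.P) (α.vE.symm (α.vE u))) = σ'.s (Quot.mk (G.PAdj σ'.P) (α.vE u))
    rw [Equiv.symm_apply_apply]
    exact hu.symm

end Push

section PiTrop

variable {G : LegGraph}

lemma piTropLen_aut (α : GraphAut G) (P : Finset G.E)
    (ℓ₁ ℓ₂ : G.E → ENNReal) (hl : ∀ e, ℓ₂ (α.eE e) = ℓ₁ e) (e : G.E) :
    piTropLen G (P.image α.eE) ℓ₂ (α.eE e) = piTropLen G P ℓ₁ e := by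
  unfold piTropLen
  by_cases h : e ∈ P
  · rw [if_pos (Finset.mem_image_of_mem _ h), if_pos h, hl]
  · rw [if_neg (fun hc => h (α.eE.injective.mem_finset_image.1 hc)), if_neg h, hl]

/-- The half-length function: halve lengths outside `P`. -/
def halfLen (G : LegGraph) (ℓ : G.E → ENNReal) (σ : SpinStructure G) : G.E → ENNReal :=
  fun e => if e ∈ σ.P then ℓ e else ℓ e / 2

lemma piTropLen_halfLen (ℓ : G.E → ENNReal) (σ : SpinStructure G) (e : G.E) :
    piTropLen G σ.P (halfLen G ℓ σ) e = ℓ e := by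
  unfold piTropLen halfLen
  by_cases h : e ∈ σ.P
  · rw [if_pos h, if_pos h]
  · rw [if_neg h, if_neg h]
    exact ENNReal.mul_div_cancel two_ne_zero ENNReal.ofNat_ne_top

end PiTrop

/-- The canonical spin curve attached to a spin structure: half the lengths
outside `P`. -/
def spinToCurve (G : LegGraph) (ℓ : G.E → ENNReal) (σ : SpinStructure G) :
    {p : (G.E → ENNReal) × SpinStructure G //
      ∃ α : GraphAut G, ∀ e, piTropLen G p.2.P p.1 (α.eE e) = ℓ e} :=
  ⟨(halfLen G ℓ σ, σ), GraphAut.one G, fun e => piTropLen_halfLen ℓ σ e⟩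

/-- Let `Γ = (G,ℓ)` be an extended tropical curve of genus
`g` with `n` legs, `G` stable.  The set of isomorphism classes of extended
spin tropical curves `(Γ',P,s)` with `Γ' = (G,ℓ')` on the same underlying
graph `G`, such that `(G, π^trop(ℓ'))` is isomorphic to `Γ`, is in bijection
with `S^trop_Γ / Aut(Γ)`. -/
theorem pitrop_fiber_description (g n : ℕ) (G : LegGraph)
    (hst : G.Stable) (hgen : G.genus = g) (hn : G.numLegs = n)
    (ℓ : G.E → ENNReal) :
    Nonempty (
      Quot (fun p q : {p : (G.E → ENNReal) × SpinStructure G //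
            ∃ α : GraphAut G, ∀ e, piTropLen G p.2.P p.1 (α.eE e) = ℓ e} =>
          ∃ α : GraphAut G,
            (∀ e, q.1.1 (α.eE e) = p.1.1 e) ∧ α.SpinMapsTo p.1.2 q.1.2)
      ≃
      Quot (fun σ σ' : SpinStructure G =>
          ∃ α : GraphAut G,
            (∀ e, ℓ (α.eE e) = ℓ e) ∧ α.SpinMapsTo σ σ')) := by
  have keyR : ∀ (σ : SpinStructure G) (w : GraphAut G),
      (∀ e, piTropLen G σ.P (halfLen G ℓ σ) (w.eE e) = ℓ e) →
      ∃ α : GraphAut G, (∀ e, ℓ (α.eE e) = ℓ e) ∧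
        α.SpinMapsTo (pushSpin w.inv σ) σ := by
    intro σ w hw
    refine ⟨w.inv.inv, fun e => ?_, spinMapsTo_inv (pushSpin_mapsTo w.inv σ)⟩
    show ℓ (w.eE.symm.symm e) = ℓ e
    rw [Equiv.symm_symm]
    exact (piTropLen_halfLen ℓ σ (w.eE e)).symm.trans (hw e)
  refine ⟨⟨Quot.lift
      (fun p => Quot.mk _ (pushSpin (Classical.choose p.2).inv p.1.2)) ?_,
    Quot.lift (fun σ => Quot.mk _ (spinToCurve G ℓ σ)) ?_, ?_, ?_⟩⟩
  · -- toFun is well defined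
    rintro p q ⟨α, hl, hsp⟩
    apply Quot.sound
    refine ⟨((Classical.choose q.2).inv).comp (α.comp ((Classical.choose p.2).inv.inv)),
      fun e => ?_, ?_⟩
    · have hw1 := Classical.choose_spec p.2
      have hw2 := Classical.choose_spec q.2
      show ℓ ((Classical.choose q.2).eE.symm
        (α.eE ((Classical.choose p.2).eE.symm.symm e))) = ℓ e
      rw [Equiv.symm_symm]
      have h2 := hw2 ((Classical.choose q.2).eE.symm (α.eE ((Classical.choose p.2).eE e)))
      rw [Equiv.apply_symm_apply] at h2
      rw [← h2, hsp.1, piTropLen_aut α p.1.2.P p.1.1 q.1.1 hl ((Classical.choose p.2).eE e)]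
      exact hw1 e
    · exact spinMapsTo_comp
        (spinMapsTo_comp (spinMapsTo_inv (pushSpin_mapsTo _ p.1.2)) hsp)
        (pushSpin_mapsTo _ q.1.2)
  · -- invFun is well defined
    rintro σ σ' ⟨α, hl, hsp⟩
    apply Quot.sound
    refine ⟨α, fun e => ?_, hsp⟩
    show (if α.eE e ∈ σ'.P then ℓ (α.eE e) else ℓ (α.eE e) / 2)
        = (if e ∈ σ.P then ℓ e else ℓ e / 2)
    by_cases h : e ∈ σ.P
    · rw [if_pos h, if_pos (by rw [hsp.1]; exact Finset.mem_image_of_mem _ h), hl e]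
    · rw [if_neg h,
        if_neg (by rw [hsp.1]; exact fun hc => h (α.eE.injective.mem_finset_image.1 hc)),
        hl e]
  · -- left inverse
    intro x
    induction x using Quot.ind with
    | mk p =>
      apply Eq.symm
      apply Quot.sound
      refine ⟨(Classical.choose p.2).inv, fun e => ?_, pushSpin_mapsTo _ p.1.2⟩
      have hw := Classical.choose_spec p.2
      have hx : ℓ ((Classical.choose p.2).eE.symm e) = piTropLen G p.1.2.P p.1.1 e := by
        have h := hw ((Classical.choose p.2).eE.symm e)
        rw [Equiv.apply_symm_apply] at h
        exact h.symm
      show (if (Classical.choose p.2).eE.symm e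
            ∈ p.1.2.P.image (⇑(Classical.choose p.2).eE.symm)
          then ℓ ((Classical.choose p.2).eE.symm e)
          else ℓ ((Classical.choose p.2).eE.symm e) / 2) = p.1.1 e
      by_cases h : e ∈ p.1.2.P
      · have hc : (Classical.choose p.2).eE.symm e
            ∈ p.1.2.P.image (⇑(Classical.choose p.2).eE.symm) :=
          Finset.mem_image_of_mem _ h
        rw [if_pos hc, hx]
        unfold piTropLen
        rw [if_pos h]
      · have hc : ¬ (Classical.choose p.2).eE.symm e
            ∈ p.1.2.P.image (⇑(Classical.choose p.2).eE.symm) :=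
          fun hc => h ((Classical.choose p.2).eE.symm.injective.mem_finset_image.1 hc)
        rw [if_neg hc, hx]
        unfold piTropLen
        rw [if_neg h, mul_comm, mul_div_assoc,
          ENNReal.div_self two_ne_zero ENNReal.ofNat_ne_top, mul_one]
  · -- right inverse
    intro x
    induction x using Quot.ind with
    | mk σ =>
      apply Quot.sound
      exact keyR σ (Classical.choose (spinToCurve G ℓ σ).2)
        (Classical.choose_spec (spinToCurve G ℓ σ).2)


end
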